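/- Let a, b be indeterminates and let R, S be the unique formal power series in ℚ[[a,b]] with zero constant term satisfying R = a(1+R)(1+S)^2 and S = b(1+R)^2(1+S). Then for all integers i, j ≥ 1, the coefficient of a^{i-1}b^{j-1} in the series (1+R)(1+S)(1 - RS) equals (1/(i·j))·C(2j+i-2, i-1)·C(2i+j-2, j-1). -/

import Mathlib

open MvPowerSeries

private noncomputable def sg (m n : ℕ) : Fin 2 →₀ ℕ := Finsupp.single 0 m + Finsupp.single 1 n

private lemma sg_succ_left (m n : ℕ) :
    sg (m+1) n = Finsupp.single (0 : Fin 2) 1 + sg m n := by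
  unfold sg
  rw [show m + 1 = 1 + m by omega, Finsupp.single_add, add_assoc]

private lemma sg_succ_right (m n : ℕ) :
    sg m (n+1) = Finsupp.single (1 : Fin 2) 1 + sg m n := by
  unfold sg
  rw [show n + 1 = 1 + n by omega, Finsupp.single_add]
  abel

private lemma sg_apply0 (m n : ℕ) : (sg m n) 0 = m := by
  simp [sg, Finsupp.single_apply]

private lemma sg_apply1 (m n : ℕ) : (sg m n) 1 = n := by
  simp [sg, Finsupp.single_apply]

private lemma coeff_X0_succ (F : MvPowerSeries (Fin 2) ℚ) (m n : ℕ) :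
    coeff (sg (m+1) n) (X 0 * F) = coeff (sg m n) F := by
  rw [sg_succ_left, show (X 0 : MvPowerSeries (Fin 2) ℚ) = monomial (Finsupp.single 0 1) 1 from rfl,
    coeff_add_monomial_mul, one_mul]

private lemma coeff_X0_zero (F : MvPowerSeries (Fin 2) ℚ) (n : ℕ) :
    coeff (sg 0 n) (X 0 * F) = 0 := by
  rw [show (X 0 : MvPowerSeries (Fin 2) ℚ) = monomial (Finsupp.single 0 1) 1 from rfl,
    coeff_monomial_mul, if_neg]
  intro h
  have := (Finsupp.le_def.mp h) 0
  rw [sg_apply0] at this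
  simp at this

private lemma coeff_X1_succ (F : MvPowerSeries (Fin 2) ℚ) (m n : ℕ) :
    coeff (sg m (n+1)) (X 1 * F) = coeff (sg m n) F := by
  rw [sg_succ_right, show (X 1 : MvPowerSeries (Fin 2) ℚ) = monomial (Finsupp.single 1 1) 1 from rfl,
    coeff_add_monomial_mul, one_mul]

private lemma coeff_X1_zero (F : MvPowerSeries (Fin 2) ℚ) (m : ℕ) :
    coeff (sg m 0) (X 1 * F) = 0 := by
  rw [show (X 1 : MvPowerSeries (Fin 2) ℚ) = monomial (Finsupp.single 1 1) 1 from rfl,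
    coeff_monomial_mul, if_neg]
  intro h
  have := (Finsupp.le_def.mp h) 1
  rw [sg_apply1] at this
  simp at this

private lemma coeff_one_sg (m n : ℕ) :
    coeff (sg m n) (1 : MvPowerSeries (Fin 2) ℚ) = if m = 0 ∧ n = 0 then 1 else 0 := by
  classical
  rw [MvPowerSeries.coeff_one]
  congr 1
  simp only [eq_iff_iff]
  constructor
  · intro h
    constructor
    · have := DFunLike.congr_fun h 0
      rwa [sg_apply0] at this
    · have := DFunLike.congr_fun h 1
      rwa [sg_apply1] at this
  · rintro ⟨rfl, rfl⟩
    simp [sg]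


private def fishA (p q m n : ℕ) : ℚ :=
  (Nat.choose (p + m + 2*n - 1) m : ℚ) * (Nat.choose (q + 2*m + n - 1) n : ℚ)
    - 4 * (if 1 ≤ m ∧ 1 ≤ n then
        (Nat.choose (p + m + 2*n - 1) (m-1) : ℚ) * (Nat.choose (q + 2*m + n - 1) (n-1) : ℚ)
      else 0)

private lemma pascalQ (N k : ℕ) :
    (Nat.choose (N+1) (k+1) : ℚ) = Nat.choose N k + Nat.choose N (k+1) := by
  exact_mod_cast Nat.choose_succ_succ N k

private lemma fishA_L1zero (p q n : ℕ) : fishA (p+1) q 0 n = fishA p q 0 n := by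
  unfold fishA
  rw [if_neg (by omega), if_neg (by omega), Nat.choose_zero_right, Nat.choose_zero_right]

private lemma fishA_L1 (p q m n : ℕ) :
    fishA (p+1) q (m+1) n = fishA p q (m+1) n + fishA (p+1) (q+2) m n := by
  unfold fishA
  rcases n with _ | n
  · rw [if_neg (by omega), if_neg (by omega), if_neg (by omega)]
    simp only [Nat.mul_zero, Nat.add_zero]
    rw [show (p + 1 + (m + 1) - 1 : ℕ) = (p+m) + 1 by omega,
        show (p + (m + 1) - 1 : ℕ) = p+m by omega,
        show (p + 1 + m - 1 : ℕ) = p+m by omega,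
        show (q + 2 + 2 * m - 1 : ℕ) = q + 2*(m+1) - 1 by omega]
    simp only [Nat.choose_zero_right]
    push_cast
    linear_combination pascalQ (p+m) m
  · rcases m with _ | m
    · rw [if_pos (by omega), if_pos (by omega), if_neg (by omega)]
      simp only [Nat.mul_zero, Nat.add_zero, Nat.zero_add, Nat.mul_one]
      rw [show (p + 1 + 1 + 2 * (n + 1) - 1 : ℕ) = (p+2*n+2) + 1 by omega,
          show (p + 1 + 2 * (n + 1) - 1 : ℕ) = p+2*n+2 by omega,
          show ((1:ℕ) - 1 : ℕ) = 0 by omega,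
          show (n + 1 - 1 : ℕ) = n by omega]
      simp only [Nat.choose_zero_right, Nat.choose_one_right]
      push_cast
      ring
    · rw [if_pos (by omega), if_pos (by omega), if_pos (by omega)]
      rw [show (p + 1 + (m + 1 + 1) + 2 * (n+1) - 1 : ℕ) = (p+m+2*n+3) + 1 by omega,
          show (p + (m + 1 + 1) + 2 * (n+1) - 1 : ℕ) = p+m+2*n+3 by omega,
          show (p + 1 + (m + 1) + 2 * (n+1) - 1 : ℕ) = p+m+2*n+3 by omega,
          show (q + 2 * (m + 1 + 1) + (n+1) - 1 : ℕ) = q+2*m+n+4 by omega,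
          show (q + 2 + 2 * (m + 1) + (n+1) - 1 : ℕ) = q+2*m+n+4 by omega,
          show (m + 1 + 1 - 1 : ℕ) = m + 1 by omega, show (m + 1 - 1 : ℕ) = m by omega,
          show (n + 1 - 1 : ℕ) = n by omega]
      push_cast
      linear_combination (Nat.choose (q+2*m+n+4) (n+1) : ℚ) * pascalQ (p+m+2*n+3) (m+1)
        - 4 * (Nat.choose (q+2*m+n+4) n : ℚ) * pascalQ (p+m+2*n+3) m

private lemma fishA_L2zero (p q m : ℕ) : fishA p (q+1) m 0 = fishA p q m 0 := by
  unfold fishA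
  rw [if_neg (by omega), if_neg (by omega), Nat.choose_zero_right, Nat.choose_zero_right]

private lemma fishA_L2 (p q m n : ℕ) :
    fishA p (q+1) m (n+1) = fishA p q m (n+1) + fishA (p+2) (q+1) m n := by
  unfold fishA
  rcases m with _ | m
  · rw [if_neg (by omega), if_neg (by omega), if_neg (by omega)]
    simp only [Nat.mul_zero, Nat.add_zero, Nat.zero_add, Nat.mul_one]
    rw [show (q + 1 + (n + 1) - 1 : ℕ) = (q+n) + 1 by omega,
        show (q + (n + 1) - 1 : ℕ) = q+n by omega,
        show (q + 1 + n - 1 : ℕ) = q+n by omega]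
    simp only [Nat.choose_zero_right]
    push_cast
    linear_combination pascalQ (q+n) n
  · rcases n with _ | n
    · rw [if_pos (by omega), if_pos (by omega), if_neg (by omega)]
      simp only [Nat.mul_zero, Nat.add_zero, Nat.zero_add, Nat.mul_one]
      rw [show (q + 1 + 2 * (m + 1) + 1 - 1 : ℕ) = (q+2*m+2) + 1 by omega,
          show (q + 2 * (m + 1) + 1 - 1 : ℕ) = q+2*m+2 by omega,
          show (q + 1 + 2 * (m + 1) - 1 : ℕ) = q+2*m+2 by omega,
          show (p + (m + 1) + 2 - 1 : ℕ) = p+m+2 by omega,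
          show (p + 2 + (m + 1) - 1 : ℕ) = p+m+2 by omega,
          show ((1:ℕ) - 1 : ℕ) = 0 by omega, show (m + 1 - 1 : ℕ) = m by omega]
      simp only [Nat.choose_zero_right, Nat.choose_one_right]
      push_cast
      ring
    · rw [if_pos (by omega), if_pos (by omega), if_pos (by omega)]
      rw [show (q + 1 + 2 * (m+1) + (n + 1 + 1) - 1 : ℕ) = (q+2*m+n+3) + 1 by omega,
          show (q + 2 * (m+1) + (n + 1 + 1) - 1 : ℕ) = q+2*m+n+3 by omega,
          show (q + 1 + 2 * (m+1) + (n + 1) - 1 : ℕ) = q+2*m+n+3 by omega,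
          show (p + (m+1) + 2 * (n + 1 + 1) - 1 : ℕ) = p+m+2*n+4 by omega,
          show (p + 2 + (m+1) + 2 * (n + 1) - 1 : ℕ) = p+m+2*n+4 by omega,
          show (n + 1 + 1 - 1 : ℕ) = n + 1 by omega, show (n + 1 - 1 : ℕ) = n by omega,
          show (m + 1 - 1 : ℕ) = m by omega]
      push_cast
      linear_combination (Nat.choose (p+m+2*n+4) (m+1) : ℚ) * pascalQ (q+2*m+n+3) (n+1)
        - 4 * (Nat.choose (p+m+2*n+4) m : ℚ) * pascalQ (q+2*m+n+3) n

private lemma fishA_zero_zero (m n : ℕ) :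
    fishA 0 0 m n = if m = 0 ∧ n = 0 then 1 else 0 := by
  unfold fishA
  simp only [zero_add]
  rcases m with _ | m
  · rcases n with _ | n
    · norm_num
    · simp [Nat.choose_eq_zero_of_lt (by omega : n + 1 - 1 < n + 1 + 1 - 1 + 1)]
  · rcases n with _ | n
    · simp
    · rw [if_pos ⟨by omega, by omega⟩, if_neg (by omega)]
      -- need C(m+2n+2, m+1) * C(2m+n+2, n+1) = 4 * C(m+2n+2, m) * C(2m+n+2, n)
      have h1 := Nat.choose_succ_right_eq (m+1+2*(n+1)-1) m
      have h2 := Nat.choose_succ_right_eq (2*(m+1)+(n+1)-1) n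
      rw [show m+1+2*(n+1)-1 - m = 2*n+2 by omega] at h1
      rw [show 2*(m+1)+(n+1)-1 - n = 2*m+2 by omega] at h2
      have h1q : (Nat.choose (m+1+2*(n+1)-1) (m+1) : ℚ) * (m+1)
          = (Nat.choose (m+1+2*(n+1)-1) m : ℚ) * (2*n+2) := by exact_mod_cast h1
      have h2q : (Nat.choose (2*(m+1)+(n+1)-1) (n+1) : ℚ) * (n+1)
          = (Nat.choose (2*(m+1)+(n+1)-1) n : ℚ) * (2*m+2) := by exact_mod_cast h2
      have hm : ((m:ℚ)+1) ≠ 0 := by positivity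
      have hn : ((n:ℚ)+1) ≠ 0 := by positivity
      rw [show m + 1 - 1 = m by omega, show n + 1 - 1 = n by omega]
      apply mul_right_cancel₀ (mul_ne_zero hm hn)
      linear_combination (Nat.choose (2*(m+1)+(n+1)-1) (n+1) : ℚ) * ((n:ℚ)+1) * h1q
        + (Nat.choose (m+1+2*(n+1)-1) m : ℚ) * (2*(n:ℚ)+2) * h2q


private lemma fish_main (R S : MvPowerSeries (Fin 2) ℚ)
    (hR : R = X 0 * (1 + R) * (1 + S) ^ 2) (hS : S = X 1 * (1 + R) ^ 2 * (1 + S)) :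
    ∀ K m n, m + n = K → ∀ p q,
      coeff (sg m n) ((1 + R) ^ p * (1 + S) ^ q) = fishA p q m n := by
  intro K
  induction K using Nat.strong_induction_on with
  | _ K IH =>
  intro m n hmn p
  induction p with
  | zero =>
    intro q
    induction q with
    | zero =>
      rw [pow_zero, pow_zero, one_mul, coeff_one_sg, fishA_zero_zero]
    | succ q ihq =>
      have hstep : (1 + R) ^ 0 * (1 + S) ^ (q + 1)
          = (1 + R) ^ 0 * (1 + S) ^ q + X 1 * ((1 + R) ^ 2 * (1 + S) ^ (q + 1)) := by
        linear_combination ((1 + S) ^ q : MvPowerSeries (Fin 2) ℚ) * hS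
      rw [hstep, map_add, ihq]
      rcases n with _ | n
      · rw [coeff_X1_zero, add_zero, fishA_L2zero]
      · rw [coeff_X1_succ, IH (m + n) (by omega) m n rfl 2 (q + 1), fishA_L2]
  | succ p ihp =>
    intro q
    have hstep : (1 + R) ^ (p + 1) * (1 + S) ^ q
        = (1 + R) ^ p * (1 + S) ^ q + X 0 * ((1 + R) ^ (p + 1) * (1 + S) ^ (q + 2)) := by
      linear_combination ((1 + R) ^ p * (1 + S) ^ q : MvPowerSeries (Fin 2) ℚ) * hR
    rw [hstep, map_add, ihp q]
    rcases m with _ | m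
    · rw [coeff_X0_zero, add_zero, fishA_L1zero]
    · rw [coeff_X0_succ, IH (m + n) (by omega) m n rfl (p + 1) (q + 2), fishA_L1]


private lemma fish_final (m n : ℕ) :
    fishA 1 1 m n - (if 1 ≤ m ∧ 1 ≤ n then fishA 4 4 (m-1) (n-1) else 0)
      = 1 / (((m:ℚ)+1) * ((n:ℚ)+1))
          * (Nat.choose (m+2*n+1) m : ℚ) * (Nat.choose (2*m+n+1) n : ℚ) := by
  rcases m with _ | m
  · rcases n with _ | n
    · norm_num [fishA]
    · rw [if_neg (by omega)]
      unfold fishA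
      rw [if_neg (by omega)]
      rw [show (1 + 0 + 2*(n+1) - 1 : ℕ) = 2*n+2 by omega,
          show (1 + 2*0 + (n+1) - 1 : ℕ) = n+1 by omega,
          show (0 + 2*(n+1) + 1 : ℕ) = 2*n+3 by omega,
          show (2*0 + (n+1) + 1 : ℕ) = (n+1)+1 by omega]
      rw [Nat.choose_zero_right, Nat.choose_self, Nat.choose_zero_right,
          Nat.choose_succ_self_right]
      push_cast
      field_simp
      norm_num
  · rcases n with _ | n
    · rw [if_neg (by omega)]
      unfold fishA
      rw [if_neg (by omega)]
      rw [show (1 + (m+1) + 2*0 - 1 : ℕ) = m+1 by omega,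
          show (1 + 2*(m+1) + 0 - 1 : ℕ) = 2*m+2 by omega,
          show (m+1 + 2*0 + 1 : ℕ) = (m+1)+1 by omega,
          show (2*(m+1) + 0 + 1 : ℕ) = 2*m+3 by omega]
      rw [Nat.choose_self, Nat.choose_zero_right, Nat.choose_succ_self_right,
          Nat.choose_zero_right]
      push_cast
      field_simp
      norm_num
    · rw [if_pos (by omega)]
      unfold fishA
      rw [if_pos (by omega)]
      rw [show (m + 1 - 1 : ℕ) = m by omega, show (n + 1 - 1 : ℕ) = n by omega]
      rw [show (1 + (m+1) + 2*(n+1) - 1 : ℕ) = m+2*n+3 by omega,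
          show (1 + 2*(m+1) + (n+1) - 1 : ℕ) = 2*m+n+3 by omega,
          show (4 + m + 2*n - 1 : ℕ) = m+2*n+3 by omega,
          show (4 + 2*m + n - 1 : ℕ) = 2*m+n+3 by omega,
          show (m + 1 + 2*(n+1) + 1 : ℕ) = m+2*n+3+1 by omega,
          show (2*(m+1) + (n+1) + 1 : ℕ) = 2*m+n+3+1 by omega]
      have h1 : (Nat.choose (m+2*n+3+1) (m+1) : ℚ) * (2*(n:ℚ)+3)
          = (Nat.choose (m+2*n+3) (m+1) : ℚ) * ((m:ℚ)+2*(n:ℚ)+4) := by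
        have h := Nat.choose_mul_succ_eq (m+2*n+3) (m+1)
        rw [show (m+2*n+3+1 - (m+1) : ℕ) = 2*n+3 by omega] at h
        have hq : (Nat.choose (m+2*n+3) (m+1) : ℚ) * ((m:ℚ)+2*(n:ℚ)+3+1)
            = (Nat.choose (m+2*n+3+1) (m+1) : ℚ) * (2*(n:ℚ)+3) := by exact_mod_cast h
        linear_combination -hq
      have h2 : (Nat.choose (2*m+n+3+1) (n+1) : ℚ) * (2*(m:ℚ)+3)
          = (Nat.choose (2*m+n+3) (n+1) : ℚ) * (2*(m:ℚ)+(n:ℚ)+4) := by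
        have h := Nat.choose_mul_succ_eq (2*m+n+3) (n+1)
        rw [show (2*m+n+3+1 - (n+1) : ℕ) = 2*m+3 by omega] at h
        have hq : (Nat.choose (2*m+n+3) (n+1) : ℚ) * (2*(m:ℚ)+(n:ℚ)+3+1)
            = (Nat.choose (2*m+n+3+1) (n+1) : ℚ) * (2*(m:ℚ)+3) := by exact_mod_cast h
        linear_combination -hq
      have h3x : (Nat.choose (m+2*n+3) (m+1) : ℚ) * ((m:ℚ)+1)
          = (Nat.choose (m+2*n+3) m : ℚ) * (2*(n:ℚ)+3) := by
        have h := Nat.choose_succ_right_eq (m+2*n+3) m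
        rw [show (m+2*n+3 - m : ℕ) = 2*n+3 by omega] at h
        exact_mod_cast h
      have h3y : (Nat.choose (2*m+n+3) (n+1) : ℚ) * ((n:ℚ)+1)
          = (Nat.choose (2*m+n+3) n : ℚ) * (2*(m:ℚ)+3) := by
        have h := Nat.choose_succ_right_eq (2*m+n+3) n
        rw [show (2*m+n+3 - n : ℕ) = 2*m+3 by omega] at h
        exact_mod_cast h
      have h3 : (Nat.choose (m+2*n+3) m : ℚ) * (Nat.choose (2*m+n+3) n : ℚ)
            * ((2*(n:ℚ)+3) * (2*(m:ℚ)+3))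
          = (Nat.choose (m+2*n+3) (m+1) : ℚ) * (Nat.choose (2*m+n+3) (n+1) : ℚ)
            * (((m:ℚ)+1) * ((n:ℚ)+1)) := by
        linear_combination (-((Nat.choose (2*m+n+3) n : ℚ) * (2*(m:ℚ)+3))) * h3x
          - (Nat.choose (m+2*n+3) (m+1) : ℚ) * ((m:ℚ)+1) * h3y
      have h4 : (if 1 ≤ m ∧ 1 ≤ n then
              (Nat.choose (m+2*n+3) (m-1) : ℚ) * (Nat.choose (2*m+n+3) (n-1) : ℚ) else 0)
            * ((2*(n:ℚ)+3) * (2*(n:ℚ)+4) * (2*(m:ℚ)+3) * (2*(m:ℚ)+4))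
          = (Nat.choose (m+2*n+3) (m+1) : ℚ) * (Nat.choose (2*m+n+3) (n+1) : ℚ)
            * (((m:ℚ)+1) * (m:ℚ) * (((n:ℚ)+1) * (n:ℚ))) := by
        by_cases hg : 1 ≤ m ∧ 1 ≤ n
        · rw [if_pos hg]
          obtain ⟨m', rfl⟩ : ∃ m', m = m' + 1 := ⟨m - 1, by omega⟩
          obtain ⟨n', rfl⟩ : ∃ n', n = n' + 1 := ⟨n - 1, by omega⟩
          rw [show (m' + 1 - 1 : ℕ) = m' by omega, show (n' + 1 - 1 : ℕ) = n' by omega]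
          have e1' := Nat.choose_succ_right_eq (m'+1+2*(n'+1)+3) m'
          rw [show (m'+1+2*(n'+1)+3 - m' : ℕ) = 2*n'+6 by omega] at e1'
          have e2' := Nat.choose_succ_right_eq (2*(m'+1)+(n'+1)+3) n'
          rw [show (2*(m'+1)+(n'+1)+3 - n' : ℕ) = 2*m'+6 by omega] at e2'
          have e1 : (Nat.choose (m'+1+2*(n'+1)+3) (m'+1) : ℚ) * ((m':ℚ)+1)
              = (Nat.choose (m'+1+2*(n'+1)+3) m' : ℚ) * (2*(n':ℚ)+6) := by exact_mod_cast e1'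
          have e2 : (Nat.choose (2*(m'+1)+(n'+1)+3) (n'+1) : ℚ) * ((n':ℚ)+1)
              = (Nat.choose (2*(m'+1)+(n'+1)+3) n' : ℚ) * (2*(m':ℚ)+6) := by exact_mod_cast e2'
          push_cast at h3x h3y ⊢
          linear_combination (-((Nat.choose (2*(m'+1)+(n'+1)+3) (n'+1+1) : ℚ)
                * ((m':ℚ)+1) * ((n':ℚ)+2) * ((n':ℚ)+1))) * h3x
            - ((2*(n':ℚ)+5) * (Nat.choose (2*(m'+1)+(n'+1)+3) (n'+1+1) : ℚ)
                * ((n':ℚ)+2) * ((n':ℚ)+1)) * e1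
            - ((Nat.choose (m'+1+2*(n'+1)+3) m' : ℚ) * (2*(n':ℚ)+6) * (2*(n':ℚ)+5)
                * ((n':ℚ)+1)) * h3y
            - ((Nat.choose (m'+1+2*(n'+1)+3) m' : ℚ) * (2*(n':ℚ)+6) * (2*(n':ℚ)+5)
                * (2*(m':ℚ)+5)) * e2
        · rw [if_neg hg]
          rcases (by omega : m = 0 ∨ n = 0) with h | h <;> rw [h] <;> push_cast <;> ring
      have key : ((Nat.choose (m+2*n+3) (m+1) : ℚ) * (Nat.choose (2*m+n+3) (n+1) : ℚ)
            - 4 * ((Nat.choose (m+2*n+3) m : ℚ) * (Nat.choose (2*m+n+3) n : ℚ))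
            - ((Nat.choose (m+2*n+3) m : ℚ) * (Nat.choose (2*m+n+3) n : ℚ)
              - 4 * (if 1 ≤ m ∧ 1 ≤ n then
                  (Nat.choose (m+2*n+3) (m-1) : ℚ) * (Nat.choose (2*m+n+3) (n-1) : ℚ) else 0)))
            * (((m:ℚ)+2) * ((n:ℚ)+2))
          = (Nat.choose (m+2*n+3+1) (m+1) : ℚ) * (Nat.choose (2*m+n+3+1) (n+1) : ℚ) := by
        have hK : ((2*(n:ℚ)+3) * (2*(n:ℚ)+4) * (2*(m:ℚ)+3) * (2*(m:ℚ)+4)) ≠ 0 := by positivity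
        apply mul_right_cancel₀ hK
        linear_combination (-5*((m:ℚ)+2)*((n:ℚ)+2)*(2*(n:ℚ)+4)*(2*(m:ℚ)+4)) * h3
          + (4*((m:ℚ)+2)*((n:ℚ)+2)) * h4
          - ((2*(n:ℚ)+4)*(2*(m:ℚ)+4)*(Nat.choose (2*m+n+3+1) (n+1) : ℚ)*(2*(m:ℚ)+3)) * h1
          - ((2*(n:ℚ)+4)*(2*(m:ℚ)+4)*(Nat.choose (m+2*n+3) (m+1) : ℚ)*((m:ℚ)+2*(n:ℚ)+4)) * h2
      push_cast
      rw [div_mul_eq_mul_div, div_mul_eq_mul_div, one_mul, eq_div_iff (by positivity)]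
      push_cast at key
      linear_combination key


/-- Bivariate Lagrange inversion result counting fighting fish: if `R, S ∈ ℚ[[a,b]]` have zero
constant term and satisfy `R = a(1+R)(1+S)^2`, `S = b(1+R)^2(1+S)`, then the coefficient of
`a^{i-1}b^{j-1}` in `(1+R)(1+S)(1-RS)` equals `(1/(ij))·C(2j+i-2, i-1)·C(2i+j-2, j-1)`. -/
theorem fish_count_coeff (R S : MvPowerSeries (Fin 2) ℚ)
    (hR0 : MvPowerSeries.constantCoeff R = 0)
    (hS0 : MvPowerSeries.constantCoeff S = 0)
    (hR : R = MvPowerSeries.X 0 * (1 + R) * (1 + S) ^ 2)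
    (hS : S = MvPowerSeries.X 1 * (1 + R) ^ 2 * (1 + S))
    (i j : ℕ) (hi : 1 ≤ i) (hj : 1 ≤ j) :
    MvPowerSeries.coeff (Finsupp.single 0 (i - 1) + Finsupp.single 1 (j - 1))
        ((1 + R) * (1 + S) * (1 - R * S))
      = (1 / ((i : ℚ) * (j : ℚ))) * (Nat.choose (2*j + i - 2) (i - 1) : ℚ) *
          (Nat.choose (2*i + j - 2) (j - 1) : ℚ) := by
  obtain ⟨m, rfl⟩ : ∃ m, i = m + 1 := ⟨i - 1, by omega⟩
  obtain ⟨n, rfl⟩ : ∃ n, j = n + 1 := ⟨j - 1, by omega⟩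
  rw [show (m + 1 - 1 : ℕ) = m by omega, show (n + 1 - 1 : ℕ) = n by omega,
      show (2*(n+1) + (m+1) - 2 : ℕ) = m + 2*n + 1 by omega,
      show (2*(m+1) + (n+1) - 2 : ℕ) = 2*m + n + 1 by omega]
  have hP : (1 + R) * (1 + S) * (1 - R * S)
      = (1 + R) ^ 1 * (1 + S) ^ 1 - X 0 * (X 1 * ((1 + R) ^ 4 * (1 + S) ^ 4)) := by
    linear_combination (-(1+R)*(1+S)*S) * hR + (-(1+R)*(1+S)*(X 0 * (1+R)*(1+S)^2)) * hS
  have hsg : (Finsupp.single (0 : Fin 2) m + Finsupp.single 1 n) = sg m n := rfl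
  rw [hsg, hP, map_sub, fish_main R S hR hS (m+n) m n rfl 1 1]
  have h2 : coeff (sg m n) (X 0 * (X 1 * ((1 + R) ^ 4 * (1 + S) ^ 4)))
      = if 1 ≤ m ∧ 1 ≤ n then fishA 4 4 (m-1) (n-1) else 0 := by
    rcases m with _ | m
    · rw [coeff_X0_zero, if_neg (by omega)]
    · rw [coeff_X0_succ]
      rcases n with _ | n
      · rw [coeff_X1_zero, if_neg (by omega)]
      · rw [coeff_X1_succ, if_pos (by omega), fish_main R S hR hS (m+n) m n rfl 4 4,
            show (m + 1 - 1 : ℕ) = m by omega, show (n + 1 - 1 : ℕ) = n by omega]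
  rw [h2, fish_final m n]
  push_cast
  ring
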